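/- Let A be an N×N matrix with integer entries and let Ā = (A°)_- be the (N+3)×(N+3) matrix obtained by first applying the Parry–Sullivan expansion and then the Cuntz splice. Then det(1 - Ā) = -det(1 - A). -/
import Mathlib


/-- Parry–Sullivan expansion at vertex `N = n+1` of an `N × N` matrix `A`:
first `N-1` rows are those of `A` with a `0` appended in column `N+1`,
row `N` is the standard basis vector `e_{N+1}`, and
row `N+1` is row `N` of `A` with a `0` appended. -/
def psExpansion {n : ℕ} (A : Matrix (Fin (n+1)) (Fin (n+1)) ℤ) :
    Matrix (Fin (n+2)) (Fin (n+2)) ℤ :=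
  Matrix.of fun i j =>
    if hi : (i : ℕ) < n then
      if hj : (j : ℕ) < n + 1 then A ⟨i, Nat.lt_succ_of_lt hi⟩ ⟨j, hj⟩ else 0
    else if (i : ℕ) = n then
      if (j : ℕ) = n + 1 then 1 else 0
    else
      if hj : (j : ℕ) < n + 1 then A ⟨n, Nat.lt_succ_self n⟩ ⟨j, hj⟩ else 0

/-- Cuntz splice of an `M × M` matrix `B` (`M = m+1`): the `(M+2) × (M+2)` matrix whose
upper-left `M × M` block is `B`, with (1-based) entries
`B₋(M,M+1) = B₋(M+1,M) = B₋(M+1,M+1) = B₋(M+1,M+2) = B₋(M+2,M+1) = B₋(M+2,M+2) = 1`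
and all other new entries `0`. -/
def cuntzSplice {m : ℕ} (B : Matrix (Fin (m+1)) (Fin (m+1)) ℤ) :
    Matrix (Fin (m+3)) (Fin (m+3)) ℤ :=
  Matrix.of fun i j =>
    if hi : (i : ℕ) < m + 1 then
      if hj : (j : ℕ) < m + 1 then B ⟨i, hi⟩ ⟨j, hj⟩
      else if (i : ℕ) = m ∧ (j : ℕ) = m + 1 then 1 else 0
    else
      if (i : ℕ) = m + 1 then
        if (j : ℕ) = m ∨ (j : ℕ) = m + 1 ∨ (j : ℕ) = m + 2 then 1 else 0
      else
        if (j : ℕ) = m + 1 ∨ (j : ℕ) = m + 2 then 1 else 0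

lemma succAbove_val {n : ℕ} (p : Fin (n+1)) (i : Fin n) :
    ((p.succAbove i : Fin (n+1)) : ℕ) = if (i:ℕ) < (p:ℕ) then (i:ℕ) else (i:ℕ)+1 := by
  rw [Fin.succAbove]
  by_cases h : (i:ℕ) < (p:ℕ)
  · rw [if_pos (by simpa [Fin.lt_def] using h), if_pos h]; rfl
  · rw [if_neg (by simpa [Fin.lt_def] using h), if_neg h]; rfl

lemma one_apply_val {n : ℕ} (i j : Fin n) :
    (1 : Matrix (Fin n) (Fin n) ℤ) i j = if (i : ℕ) = (j : ℕ) then 1 else 0 := by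
  rw [Matrix.one_apply]
  by_cases h : i = j
  · rw [if_pos h, if_pos (congrArg Fin.val h)]
  · rw [if_neg h, if_neg (fun hv => h (Fin.ext hv))]

lemma det_one_sub_ps {n : ℕ} (A : Matrix (Fin (n+1)) (Fin (n+1)) ℤ) :
    ((1 : Matrix (Fin (n+2)) (Fin (n+2)) ℤ) - psExpansion A).det
      = ((1 : Matrix (Fin (n+1)) (Fin (n+1)) ℤ) - A).det := by
  set M : Matrix (Fin (n+2)) (Fin (n+2)) ℤ := 1 - psExpansion A with hM
  have entry : ∀ i j : Fin (n+2), M i j =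
      (if (i:ℕ) = (j:ℕ) then 1 else 0) -
      (if hi : (i : ℕ) < n then
        if hj : (j : ℕ) < n + 1 then A ⟨i, Nat.lt_succ_of_lt hi⟩ ⟨j, hj⟩ else 0
      else if (i : ℕ) = n then
        if (j : ℕ) = n + 1 then 1 else 0
      else
        if hj : (j : ℕ) < n + 1 then A ⟨n, Nat.lt_succ_self n⟩ ⟨j, hj⟩ else 0) := by
    intro i j
    rw [hM, Matrix.sub_apply, one_apply_val]
    rfl
  rw [Matrix.det_succ_column M (Fin.last (n+1))]
  rw [Fin.sum_univ_castSucc, Fin.sum_univ_castSucc]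
  have hz : ∀ i : Fin n,
      (-1 : ℤ) ^ ((((i.castSucc.castSucc : Fin (n+2)) : ℕ)) + ((Fin.last (n+1) : Fin (n+2)) : ℕ))
        * M i.castSucc.castSucc (Fin.last (n+1))
        * (M.submatrix (i.castSucc.castSucc).succAbove (Fin.last (n+1)).succAbove).det = 0 := by
    intro i
    have h1 : M i.castSucc.castSucc (Fin.last (n+1)) = 0 := by
      rw [entry]
      simp only [Fin.coe_castSucc, Fin.val_last]
      split_ifs <;> omega
    rw [h1]; ring
  rw [Finset.sum_eq_zero (fun i _ => hz i), zero_add]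
  have e1 : M ((Fin.last n).castSucc) (Fin.last (n+1)) = -1 := by
    rw [entry]
    simp only [Fin.coe_castSucc, Fin.val_last]
    split_ifs <;> omega
  have e2 : M (Fin.last (n+1)) (Fin.last (n+1)) = 1 := by
    rw [entry]
    simp only [Fin.val_last]
    split_ifs <;> omega
  rw [e1, e2]
  have hBeq : M.submatrix (Fin.last (n+1)).succAbove (Fin.last (n+1)).succAbove
      = (1 - A).updateRow (Fin.last n)
          (fun j => (1 : Matrix (Fin (n+1)) (Fin (n+1)) ℤ) (Fin.last n) j) := by
    ext i j
    rw [Matrix.submatrix_apply, Fin.succAbove_last, entry, Matrix.updateRow_apply,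
      Matrix.sub_apply, one_apply_val, one_apply_val]
    simp only [Fin.coe_castSucc, Fin.val_last, Fin.ext_iff, Fin.eta]
    split_ifs <;> first | rfl | omega | (rw [if_neg (show ¬(i:ℕ) = n by omega)]) | (rw [if_pos (show (i:ℕ) = n by omega)]) | (simp [Fin.last]; done) | (rw [if_pos (show (i:ℕ) = n by omega)]; simp [Fin.last]; done) | (rw [if_neg (show ¬(i:ℕ) = n by omega)]; simp [Fin.last]; done)
  have hAeq : M.submatrix ((Fin.last n).castSucc).succAbove (Fin.last (n+1)).succAbove
      = (1 - A).updateRow (Fin.last n) (fun j => -A (Fin.last n) j) := by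
    ext i j
    rw [Matrix.submatrix_apply, Fin.succAbove_last, entry, Matrix.updateRow_apply,
      Matrix.sub_apply, one_apply_val]
    simp only [succAbove_val, Fin.coe_castSucc, Fin.val_last, Fin.ext_iff, Fin.eta]
    split_ifs <;> first | rfl | omega | (rw [if_neg (show ¬(i:ℕ) = n by omega)]) | (rw [if_pos (show (i:ℕ) = n by omega)]) | (simp [Fin.last]; done) | (rw [if_pos (show (i:ℕ) = n by omega)]; simp [Fin.last]; done) | (rw [if_neg (show ¬(i:ℕ) = n by omega)]; simp [Fin.last]; done)
  rw [hBeq, hAeq]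
  have sgn1 : (-1 : ℤ) ^ ((((Fin.last n).castSucc : Fin (n+2)) : ℕ) + ((Fin.last (n+1) : Fin (n+2)) : ℕ)) = -1 := by
    simp only [Fin.coe_castSucc, Fin.val_last]
    exact Odd.neg_one_pow ⟨n, by ring⟩
  have sgn2 : (-1 : ℤ) ^ (((Fin.last (n+1) : Fin (n+2)) : ℕ) + ((Fin.last (n+1) : Fin (n+2)) : ℕ)) = 1 := by
    simp only [Fin.val_last]
    exact Even.neg_one_pow ⟨n+1, by ring⟩
  rw [sgn1, sgn2]
  have expand : ((1 : Matrix (Fin (n+1)) (Fin (n+1)) ℤ) - A).det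
      = ((1 - A).updateRow (Fin.last n)
          (fun j => (1 : Matrix (Fin (n+1)) (Fin (n+1)) ℤ) (Fin.last n) j)).det
        + ((1 - A).updateRow (Fin.last n) (fun j => -A (Fin.last n) j)).det := by
    rw [← Matrix.det_updateRow_add]
    congr 1
    ext i j
    rw [Matrix.updateRow_apply]
    split_ifs with h
    · subst h
      simp [Matrix.sub_apply, sub_eq_add_neg]
    · rfl
  rw [expand]
  ring

set_option maxHeartbeats 2000000 in
theorem det_one_sub_cuntzSplice {n : ℕ} (B : Matrix (Fin (n+2)) (Fin (n+2)) ℤ) :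
    ((1 : Matrix (Fin (n+4)) (Fin (n+4)) ℤ) - cuntzSplice B).det
      = -((1 : Matrix (Fin (n+2)) (Fin (n+2)) ℤ) - B).det := by
  set N : Matrix (Fin (n+4)) (Fin (n+4)) ℤ := 1 - cuntzSplice B with hN
  have entry : ∀ i j : Fin (n+4), N i j =
      (if (i:ℕ) = (j:ℕ) then 1 else 0) -
      (if hi : (i : ℕ) < n + 2 then
        if hj : (j : ℕ) < n + 2 then B ⟨i, hi⟩ ⟨j, hj⟩
        else if (i : ℕ) = n + 1 ∧ (j : ℕ) = n + 2 then 1 else 0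
      else
        if (i : ℕ) = n + 2 then
          if (j : ℕ) = n + 1 ∨ (j : ℕ) = n + 2 ∨ (j : ℕ) = n + 3 then 1 else 0
        else
          if (j : ℕ) = n + 2 ∨ (j : ℕ) = n + 3 then 1 else 0) := by
    intro i j
    rw [hN, Matrix.sub_apply, one_apply_val]
    rfl
  rw [Matrix.det_succ_row N (Fin.last (n+3))]
  rw [Finset.sum_eq_single (⟨n+2, by omega⟩ : Fin (n+4))]
  · -- main term
    have e0 : N (Fin.last (n+3)) ⟨n+2, by omega⟩ = -1 := by
      rw [entry]
      simp only [Fin.val_last, Fin.val_mk]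
      split_ifs <;> first | omega | simp_all
    rw [e0]
    have hsgn : (-1 : ℤ) ^ (((Fin.last (n+3) : Fin (n+4)) : ℕ) + ((⟨n+2, by omega⟩ : Fin (n+4)) : ℕ)) = -1 := by
      simp only [Fin.val_last, Fin.val_mk]
      exact Odd.neg_one_pow ⟨n+2, by ring⟩
    rw [hsgn]
    -- expand the (n+3)-minor along its last row
    set M1 : Matrix (Fin (n+3)) (Fin (n+3)) ℤ :=
      N.submatrix (Fin.last (n+3)).succAbove (⟨n+2, by omega⟩ : Fin (n+4)).succAbove with hM1
    rw [Matrix.det_succ_row M1 (Fin.last (n+2))]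
    rw [Fin.sum_univ_castSucc, Fin.sum_univ_castSucc]
    have hz : ∀ i : Fin (n+1),
        (-1 : ℤ) ^ ((((Fin.last (n+2) : Fin (n+3)) : ℕ)) + ((i.castSucc.castSucc : Fin (n+3)) : ℕ))
          * M1 (Fin.last (n+2)) i.castSucc.castSucc
          * (M1.submatrix (Fin.last (n+2)).succAbove (i.castSucc.castSucc).succAbove).det = 0 := by
      intro i
      have h1 : M1 (Fin.last (n+2)) i.castSucc.castSucc = 0 := by
        rw [hM1, Matrix.submatrix_apply, Fin.succAbove_last, entry]
        simp only [succAbove_val, Fin.coe_castSucc, Fin.val_last, Fin.val_mk]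
        split_ifs <;> first | omega | simp_all
      rw [h1]; ring
    rw [Finset.sum_eq_zero (fun i _ => hz i), zero_add]
    -- the (n+1)-column term : its minor has a zero column
    have ez : M1 (Fin.last (n+2)) ((Fin.last (n+1)).castSucc) = -1 := by
      rw [hM1, Matrix.submatrix_apply, Fin.succAbove_last, entry]
      simp only [succAbove_val, Fin.coe_castSucc, Fin.val_last, Fin.val_mk]
      split_ifs <;> first | omega | simp_all
    have dz : (M1.submatrix (Fin.last (n+2)).succAbove
        ((Fin.last (n+1)).castSucc).succAbove).det = 0 := by
      apply Matrix.det_eq_zero_of_column_eq_zero (Fin.last (n+1))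
      intro i
      rw [Matrix.submatrix_apply, hM1, Matrix.submatrix_apply, Fin.succAbove_last, entry]
      simp only [succAbove_val, Fin.coe_castSucc, Fin.val_last, Fin.val_mk]
      split_ifs <;> first | omega | simp_all
    -- the last-column term
    have el : M1 (Fin.last (n+2)) (Fin.last (n+2)) = -1 := by
      rw [hM1, Matrix.submatrix_apply, Fin.succAbove_last, entry]
      simp only [succAbove_val, Fin.coe_castSucc, Fin.val_last, Fin.val_mk]
      split_ifs <;> first | omega | simp_all
    have hminor : M1.submatrix (Fin.last (n+2)).succAbove (Fin.last (n+2)).succAbove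
        = (1 : Matrix (Fin (n+2)) (Fin (n+2)) ℤ) - B := by
      ext i j
      rw [Matrix.submatrix_apply, Fin.succAbove_last, hM1, Matrix.submatrix_apply,
        Fin.succAbove_last, entry, Matrix.sub_apply, one_apply_val]
      simp only [succAbove_val, Fin.coe_castSucc, Fin.val_last, Fin.val_mk, Fin.eta]
      have hi : (i : ℕ) < n + 2 := i.isLt
      have hj : (j : ℕ) < n + 2 := j.isLt
      have hcol : (if (j:ℕ) < n + 2 then (j:ℕ) else (j:ℕ)+1) = (j:ℕ) := if_pos hj
      simp only [hcol, dif_pos hi, dif_pos hj, Fin.eta]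
    rw [ez, dz, el, hminor]
    simp only [Fin.val_last, Fin.coe_castSucc]
    have h1 : (-1 : ℤ) ^ ((n+2) + (n+1)) = -1 := Odd.neg_one_pow ⟨n+1, by ring⟩
    have h2 : (-1 : ℤ) ^ ((n+2) + (n+2)) = 1 := Even.neg_one_pow ⟨n+2, by ring⟩
    rw [h1, h2]
    ring
  · intro b _ hb
    have hb' : (b : ℕ) ≠ n + 2 := by
      intro h; exact hb (Fin.ext h)
    have h0 : N (Fin.last (n+3)) b = 0 := by
      rw [entry]
      simp only [Fin.val_last, Fin.val_mk]
      split_ifs <;> first | omega | simp_all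
    rw [h0]; ring
  · intro h
    exact absurd (Finset.mem_univ _) h

/-- For `Ā = (A°)₋`, Parry–Sullivan expansion followed by Cuntz splice,
`det(1 - Ā) = -det(1 - A)`. -/
theorem det_one_sub_bar {n : ℕ} (A : Matrix (Fin (n+1)) (Fin (n+1)) ℤ) :
    ((1 : Matrix (Fin (n+4)) (Fin (n+4)) ℤ) - cuntzSplice (psExpansion A)).det
      = -((1 : Matrix (Fin (n+1)) (Fin (n+1)) ℤ) - A).det := by
  rw [det_one_sub_cuntzSplice (psExpansion A), det_one_sub_ps A]
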